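/- Let m ≥ 1, let y_0 < y_1 < ⋯ < y_m be real numbers, let c_j < d_j for j ∈ {1,…,m}, let L_{2,j} : ℝ → ℝ be the affine map with L_{2,j}(c_j) = y_{j−1} and L_{2,j}(d_j) = y_j, and define φ_j(y) = d_j if y > y_j, φ_j(y) = L_{2,j}^{−1}(y) if y_{j−1} ≤ y ≤ y_j, φ_j(y) = c_j if y < y_{j−1}. Let f : ℝ × ℝ → ℝ, let L_{1,i} : ℝ → ℝ be any function, set f_{i,0}(x,y) = f(L_{1,i}(x), y) and f_{i,j}(x,y) = f(L_{1,i}(x), L_{2,j}(y)). Then for every real u and every y ∈ [y_0, y_m], f_{i,0}(u, y) = ∑_{j=1}^m f_{i,j}(u, φ_j(y)) − ∑_{j=1}^{m−1} f_{i,0}(u, y_j). -/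

import Mathlib

/-- The affine map `L_{2,j}(t) = y_{j−1} + (t − c_j)·(y_j − y_{j−1})/(d_j − c_j)`,
so that `L_{2,j}(c_j) = y_{j−1}` and `L_{2,j}(d_j) = y_j`. -/
noncomputable def LFun (y c d : ℕ → ℝ) (j : ℕ) (t : ℝ) : ℝ :=
  y (j - 1) + (t - c j) * (y j - y (j - 1)) / (d j - c j)

/-- The clamped inverse of `L_{2,j}`:
`φ_j(t) = d_j` for `t > y_j`, `φ_j(t) = L_{2,j}⁻¹(t)` on `[y_{j−1}, y_j]`,
and `φ_j(t) = c_j` for `t < y_{j−1}`. -/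
noncomputable def clampInv (y c d : ℕ → ℝ) (j : ℕ) (t : ℝ) : ℝ :=
  if y j < t then d j
  else if y (j - 1) ≤ t then c j + (t - y (j - 1)) * (d j - c j) / (y j - y (j - 1))
  else c j

lemma lfun_clamp (y c d : ℕ → ℝ) (j : ℕ) (hy : y (j-1) < y j) (hcd : c j < d j) (v : ℝ) :
    LFun y c d j (clampInv y c d j v) = max (y (j-1)) (min (y j) v) := by
  have hy' : y j - y (j-1) ≠ 0 := sub_ne_zero.2 hy.ne'
  have hcd' : d j - c j ≠ 0 := sub_ne_zero.2 hcd.ne'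
  unfold LFun clampInv
  by_cases h1 : y j < v
  · rw [if_pos h1, min_eq_left h1.le, max_eq_right hy.le]
    field_simp
    ring
  · rw [if_neg h1]
    push_neg at h1
    by_cases h2 : y (j-1) ≤ v
    · rw [if_pos h2, min_eq_right h1, max_eq_right h2]
      field_simp
      ring
    · rw [if_neg h2]
      push_neg at h2
      rw [min_eq_right (h2.le.trans hy.le), max_eq_left h2.le]
      field_simp
      ring

lemma y_mono (y : ℕ → ℝ) (m : ℕ) (hy : ∀ j ∈ Finset.Icc 1 m, y (j-1) < y j) :
    ∀ j ≤ m, y j ≤ y m := by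
  intro j hj
  induction m with
  | zero => interval_cases j; rfl
  | succ n ih =>
    rcases Nat.le_succ_iff.1 hj with h | h
    · have h1 : y j ≤ y n := ih (fun k hk => hy k (Finset.mem_Icc.2
        ⟨(Finset.mem_Icc.1 hk).1, (Finset.mem_Icc.1 hk).2.trans (Nat.le_succ n)⟩)) h
      have h2 : y n < y (n+1) := by
        have := hy (n+1) (Finset.mem_Icc.2 ⟨Nat.succ_le_succ (Nat.zero_le n), le_refl _⟩)
        simpa using this
      linarith
    · rw [h]

lemma sum_clamp (F : ℝ → ℝ) (y : ℕ → ℝ) :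
    ∀ m, 1 ≤ m → (∀ j ∈ Finset.Icc 1 m, y (j-1) < y j) → ∀ v ∈ Set.Icc (y 0) (y m),
    ∑ j ∈ Finset.Icc 1 m, F (max (y (j-1)) (min (y j) v))
      = F v + ∑ j ∈ Finset.Icc 1 (m-1), F (y j) := by
  intro m hm
  induction m, hm using Nat.le_induction with
  | base =>
    intro hy v hv
    simp only [Finset.Icc_self, Finset.sum_singleton, Nat.sub_self]
    rw [min_eq_right hv.2, max_eq_right hv.1]
    simp
  | succ n hn ih =>
    intro hy v hv
    have hyn : y n < y (n+1) := by
      have := hy (n+1) (Finset.mem_Icc.2 ⟨Nat.succ_le_succ (Nat.zero_le n), le_refl _⟩)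
      simpa using this
    have hyIcc : ∀ j ∈ Finset.Icc 1 n, y (j-1) < y j := fun k hk =>
      hy k (Finset.mem_Icc.2 ⟨(Finset.mem_Icc.1 hk).1, (Finset.mem_Icc.1 hk).2.trans (Nat.le_succ n)⟩)
    rw [Finset.sum_Icc_succ_top (Nat.le_add_left 1 n)]
    by_cases hc : v ≤ y n
    · have hterm : max (y ((n+1)-1)) (min (y (n+1)) v) = y n := by
        simp only [Nat.add_sub_cancel]
        rw [min_eq_right (hc.trans hyn.le), max_eq_left hc]
      rw [hterm, ih hyIcc v ⟨hv.1, hc⟩]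
      have : n + 1 - 1 = (n - 1) + 1 := by omega
      rw [this, Finset.sum_Icc_succ_top (by omega : 1 ≤ n - 1 + 1)]
      have : n - 1 + 1 = n := by omega
      rw [this]
      ring
    · push_neg at hc
      have hterm : max (y ((n+1)-1)) (min (y (n+1)) v) = v := by
        simp only [Nat.add_sub_cancel]
        rw [min_eq_right hv.2, max_eq_right hc.le]
      rw [hterm]
      have hsum : ∑ j ∈ Finset.Icc 1 n, F (max (y (j-1)) (min (y j) v))
          = ∑ j ∈ Finset.Icc 1 n, F (y j) := by
        refine Finset.sum_congr rfl fun j hj => ?_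
        have hj' := Finset.mem_Icc.1 hj
        have h1 : y j ≤ y n := y_mono y n hyIcc j hj'.2
        have h2 : y (j-1) < y j := hyIcc j hj
        rw [min_eq_left (h1.trans hc.le), max_eq_right h2.le]
      rw [hsum]
      simp only [Nat.add_sub_cancel]
      ring

/-- Decomposition of a partial composition in the second variable:
`f_{i,0}(u, y) = ∑_{j=1}^m f_{i,j}(u, φ_j(y)) − ∑_{j=1}^{m−1} f_{i,0}(u, y_j)`
for every real `u` and every `y ∈ [y_0, y_m]`, where `f_{i,0}(x, y) = f(L_{1,i}(x), y)`
and `f_{i,j}(x, y) = f(L_{1,i}(x), L_{2,j}(y))`. -/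
theorem decomposition_partial_composition (m : ℕ) (hm : 1 ≤ m) (y c d : ℕ → ℝ)
    (hy : ∀ j ∈ Finset.Icc 1 m, y (j - 1) < y j)
    (hcd : ∀ j ∈ Finset.Icc 1 m, c j < d j)
    (f : ℝ → ℝ → ℝ) (L1 : ℝ → ℝ) :
    ∀ u : ℝ, ∀ v ∈ Set.Icc (y 0) (y m),
      f (L1 u) v = (∑ j ∈ Finset.Icc 1 m, f (L1 u) (LFun y c d j (clampInv y c d j v)))
                     - ∑ j ∈ Finset.Icc 1 (m - 1), f (L1 u) (y j) := by
  intro u v hv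
  have h1 : ∑ j ∈ Finset.Icc 1 m, f (L1 u) (LFun y c d j (clampInv y c d j v))
      = ∑ j ∈ Finset.Icc 1 m, f (L1 u) (max (y (j-1)) (min (y j) v)) := by
    refine Finset.sum_congr rfl fun j hj => ?_
    rw [lfun_clamp y c d j (hy j hj) (hcd j hj)]
  rw [h1, sum_clamp (f (L1 u)) y m hm hy v hv]
  ring
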